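/- Let β, γ, d > 0 with R₀ = β/(γ+d) > 1. Suppose S, I : [0,∞) → [0,1] satisfy I'(t) = (γ+d)I(t)(R₀S(t) − 1), I(0) > 0, and for every ε > 0 there is T with S'(t) ≥ d(1−S(t)) − ε for t > T whenever I(t) < ε/β for t > T. Then it is impossible that (S(t), I(t)) → (1, 0) as t → ∞. -/
import Mathlib

open Filter Set

theorem stmt_17 (β γ d : ℝ) (hβ : 0 < β) (hγ : 0 < γ) (hd : 0 < d)
    (R₀ : ℝ) (hR₀ : R₀ = β / (γ + d)) (hR : 1 < R₀)
    (S I : ℝ → ℝ)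
    (hSv : ∀ t ≥ (0:ℝ), S t ∈ Set.Icc (0:ℝ) 1) (hIv : ∀ t ≥ (0:ℝ), I t ∈ Set.Icc (0:ℝ) 1)
    (hSdiff : ∀ t ≥ (0:ℝ), DifferentiableAt ℝ S t)
    (hI : ∀ t ≥ (0:ℝ), HasDerivAt I ((γ + d) * I t * (R₀ * S t - 1)) t)
    (hI0 : 0 < I 0)
    (hcomp : ∀ ε > (0:ℝ), ∃ T : ℝ, (∀ t > T, I t < ε / β) →
      ∀ t > T, d * (1 - S t) - ε ≤ deriv S t) :
    ¬ Filter.Tendsto (fun t => (S t, I t)) Filter.atTop (nhds ((1:ℝ), (0:ℝ))) := by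
  intro h
  -- Positivity of I on [0, ∞)
  have hpos : ∀ t ≥ (0:ℝ), 0 < I t := by
    intro t₀ ht₀
    rcases lt_or_eq_of_le (hIv t₀ ht₀).1 with h' | h'
    · exact h'
    exfalso
    have key := norm_le_gronwallBound_of_norm_deriv_right_le
      (f := fun s => I (t₀ - s))
      (f' := fun s => ((γ + d) * I (t₀ - s) * (R₀ * S (t₀ - s) - 1)) * (-1))
      (δ := 0) (K := (γ + d) * (R₀ + 1)) (ε := 0) (a := 0) (b := t₀)
      ?_ ?_ ?_ ?_ t₀ (by constructor <;> linarith)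
    · rw [gronwallBound_ε0] at key
      simp at key
      linarith
    · intro s hs
      have hu : (0:ℝ) ≤ t₀ - s := by linarith [hs.2]
      exact ((hI (t₀ - s) hu).comp s ((hasDerivAt_id s).const_sub t₀)).continuousAt.continuousWithinAt
    · intro s hs
      have hu : (0:ℝ) ≤ t₀ - s := by linarith [hs.2]
      exact (((hI (t₀ - s) hu).comp s ((hasDerivAt_id s).const_sub t₀))).hasDerivWithinAt
    · simp [← h']
    · intro s hs
      have hu : (0:ℝ) ≤ t₀ - s := by linarith [hs.2]
      have hIu := hIv (t₀ - s) hu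
      have hSu := hSv (t₀ - s) hu
      have habs : |R₀ * S (t₀ - s) - 1| ≤ R₀ + 1 := by
        rw [abs_le]
        constructor <;> nlinarith [hSu.1, hSu.2]
      rw [Real.norm_eq_abs, Real.norm_eq_abs, abs_mul, abs_mul, abs_mul]
      have h1 : |γ + d| = γ + d := abs_of_pos (by linarith)
      have h2 : |I (t₀ - s)| = I (t₀ - s) := abs_of_nonneg hIu.1
      rw [h1, h2]
      simp only [abs_neg, abs_one, mul_one]
      nlinarith [mul_le_mul_of_nonneg_left habs (mul_nonneg (by linarith : (0:ℝ) ≤ γ + d) hIu.1)]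
  -- Tendsto components
  have hS : Tendsto S atTop (nhds 1) := (continuous_fst.tendsto _).comp h
  have hIt : Tendsto I atTop (nhds 0) := (continuous_snd.tendsto _).comp h
  have hR0pos : 0 < R₀ := by linarith
  have h1 : (1:ℝ) / R₀ < 1 := by rw [div_lt_one hR0pos]; linarith
  obtain ⟨T₁, hT₁⟩ := eventually_atTop.mp (hS.eventually (eventually_gt_nhds h1))
  set T : ℝ := max T₁ 0 with hTdef
  have hT0 : (0:ℝ) ≤ T := le_max_right _ _
  have hITpos : 0 < I T := hpos T hT0
  have hmono : MonotoneOn I (Set.Ici T) := by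
    apply monotoneOn_of_deriv_nonneg (convex_Ici T)
    · intro x hx
      have hx0 : (0:ℝ) ≤ x := le_trans hT0 hx
      exact (hI x hx0).continuousAt.continuousWithinAt
    · intro x hx
      rw [interior_Ici] at hx
      have hx0 : (0:ℝ) ≤ x := le_trans hT0 (le_of_lt hx)
      exact ((hI x hx0).differentiableAt).differentiableWithinAt
    · intro x hx
      rw [interior_Ici] at hx
      have hx0 : (0:ℝ) ≤ x := le_trans hT0 (le_of_lt hx)
      rw [(hI x hx0).deriv]
      have hxT₁ : T₁ ≤ x := le_trans (le_max_left _ _) (le_of_lt hx)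
      have hSx := hT₁ x hxT₁
      have hIx := (hIv x hx0).1
      have : 1 < R₀ * S x := by
        rw [div_lt_iff₀ hR0pos] at hSx
        nlinarith [hSx]
      exact mul_nonneg (mul_nonneg (by linarith) hIx) (by linarith)
  obtain ⟨t, hlt, hge⟩ := ((hIt.eventually (eventually_lt_nhds hITpos)).and
    (eventually_ge_atTop T)).exists
  have := hmono (self_mem_Ici) hge hge
  linarith
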